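/- Let q be a positive integer, χ₁,…,χ_s Dirichlet characters mod q, F₁,…,F_R ∈ ℤ[x₁,…,x_s], a ∈ ℤ^R. Set C = ∑_{h mod q} χ₁(h₁)⋯χ_s(h_s) e(a·F(h)/q), G(h;j)=F(h₁j₁,…,h_sj_s), and L(h,h';j,j') = G(h;j) − G(h;j') − G(h';j) + G(h';j'). Then |C|⁴ ≤ ∑_{h,h',j,j' mod q} e(a·L(h,h';j,j')/q), where the right-hand side is a sum over all quadruples of tuples in (ℤ/qℤ)^s (in particular the right-hand side is a nonnegative real number). -/

import Mathlib

open BigOperators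

set_option maxHeartbeats 1000000

noncomputable def e (x : ℝ) : ℂ := Complex.exp (2 * (Real.pi : ℂ) * Complex.I * (x : ℂ))

noncomputable def Gv (q s R : ℕ) [NeZero q] (F : Fin R → MvPolynomial (Fin s) ℤ)
    (h j : Fin s → ZMod q) (r : Fin R) : ℤ :=
  MvPolynomial.eval (fun t => (((h t) * (j t)).val : ℤ)) (F r)

lemma e_add (x y : ℝ) : e (x + y) = e x * e y := by
  simp only [e, ← Complex.exp_add]
  push_cast
  ring_nf

lemma conj_e (x : ℝ) : (starRingEnd ℂ) (e x) = e (-x) := by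
  simp only [e, ← Complex.exp_conj]
  congr 1
  rw [show ((2:ℂ) * Real.pi * Complex.I * x) = ((2*Real.pi*x : ℝ) : ℂ) * Complex.I by push_cast; ring,
    show ((2:ℂ) * Real.pi * Complex.I * ((-x : ℝ) : ℂ)) = -(((2*Real.pi*x : ℝ) : ℂ) * Complex.I) by push_cast; ring]
  rw [map_mul, Complex.conj_I, Complex.conj_ofReal]
  ring

lemma abs_e (x : ℝ) : ‖e x‖ = 1 := by
  simp only [e, Complex.norm_exp]
  have : (2 * (Real.pi : ℂ) * Complex.I * (x : ℂ)).re = 0 := by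
    simp [Complex.mul_re, Complex.mul_im]
  rw [this, Real.exp_zero]

/-- After two applications of Cauchy–Schwarz:
`|C|⁴ ≤ ∑_{h,h',j,j' mod q} e(a·L(h,h';j,j')/q)` with
`L = G(h;j) − G(h;j') − G(h';j) + G(h';j')`; in particular the right-hand side is a
nonnegative real number. -/
theorem stmt3 (q : ℕ) [NeZero q] (s R : ℕ) (χ : Fin s → DirichletCharacter ℂ q)
    (F : Fin R → MvPolynomial (Fin s) ℤ) (a : Fin R → ℤ) :
    (∑ h : Fin s → ZMod q, ∑ h' : Fin s → ZMod q, ∑ j : Fin s → ZMod q, ∑ j' : Fin s → ZMod q,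
        e ((((∑ r, a r * (Gv q s R F h j r - Gv q s R F h j' r
            - Gv q s R F h' j r + Gv q s R F h' j' r)) : ℤ) : ℝ) / q)).im = 0 ∧
    ‖∑ h : Fin s → ZMod q, (∏ i, χ i (h i)) *
        e ((((∑ r, a r * MvPolynomial.eval (fun t => ((h t).val : ℤ)) (F r)) : ℤ) : ℝ) / q)‖ ^ 4
      ≤ (∑ h : Fin s → ZMod q, ∑ h' : Fin s → ZMod q, ∑ j : Fin s → ZMod q, ∑ j' : Fin s → ZMod q,
          e ((((∑ r, a r * (Gv q s R F h j r - Gv q s R F h j' r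
              - Gv q s R F h' j r + Gv q s R F h' j' r)) : ℤ) : ℝ) / q)).re := by
  classical
  set A : (Fin s → ZMod q) → (Fin s → ZMod q) → ℝ := fun h j =>
    (((∑ r, a r * Gv q s R F h j r : ℤ) : ℝ) / q) with hA
  set w : (Fin s → ZMod q) → ℂ := fun h => ∏ i, χ i (h i) with hw
  set S : (Fin s → ZMod q) → (Fin s → ZMod q) → ℂ :=
    fun h h' => ∑ j, e (A h j) * (starRingEnd ℂ) (e (A h' j)) with hS
  -- splitting of the exponential of L
  have hsplit : ∀ h h' j j' : Fin s → ZMod q,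
      e ((((∑ r, a r * (Gv q s R F h j r - Gv q s R F h j' r
          - Gv q s R F h' j r + Gv q s R F h' j' r)) : ℤ) : ℝ) / q)
        = (e (A h j) * (starRingEnd ℂ) (e (A h' j))) *
            (starRingEnd ℂ) (e (A h j') * (starRingEnd ℂ) (e (A h' j'))) := by
    intro h h' j j'
    have harg : (((∑ r, a r * (Gv q s R F h j r - Gv q s R F h j' r
          - Gv q s R F h' j r + Gv q s R F h' j' r)) : ℤ) : ℝ) / q
        = (A h j + -(A h' j)) + (-(A h j') + A h' j') := by
      have h1 : (∑ r, a r * (Gv q s R F h j r - Gv q s R F h j' r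
          - Gv q s R F h' j r + Gv q s R F h' j' r))
          = (∑ r, a r * Gv q s R F h j r) - (∑ r, a r * Gv q s R F h j' r)
          - (∑ r, a r * Gv q s R F h' j r) + (∑ r, a r * Gv q s R F h' j' r) := by
        simp only [mul_sub, mul_add, Finset.sum_add_distrib, Finset.sum_sub_distrib]
      rw [h1, hA]
      push_cast
      ring
    rw [harg, e_add, e_add, e_add]
    simp only [map_mul, conj_e, Complex.conj_conj, neg_neg]
  -- inner double sum is |S h h'|²
  have hinner : ∀ h h' : Fin s → ZMod q,
      (∑ j : Fin s → ZMod q, ∑ j' : Fin s → ZMod q,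
        e ((((∑ r, a r * (Gv q s R F h j r - Gv q s R F h j' r
            - Gv q s R F h' j r + Gv q s R F h' j' r)) : ℤ) : ℝ) / q))
      = ((Complex.normSq (S h h') : ℝ) : ℂ) := by
    intro h h'
    calc (∑ j : Fin s → ZMod q, ∑ j' : Fin s → ZMod q,
        e ((((∑ r, a r * (Gv q s R F h j r - Gv q s R F h j' r
            - Gv q s R F h' j r + Gv q s R F h' j' r)) : ℤ) : ℝ) / q))
        = ∑ j : Fin s → ZMod q, ∑ j' : Fin s → ZMod q,
            (e (A h j) * (starRingEnd ℂ) (e (A h' j))) *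
              (starRingEnd ℂ) (e (A h j') * (starRingEnd ℂ) (e (A h' j'))) :=
          Finset.sum_congr rfl fun j _ => Finset.sum_congr rfl fun j' _ => hsplit h h' j j'
      _ = S h h' * (starRingEnd ℂ) (S h h') := by
          simp only [hS]
          rw [map_sum, Finset.sum_mul_sum]
      _ = ((Complex.normSq (S h h') : ℝ) : ℂ) := Complex.mul_conj _
  have hRHS : (∑ h : Fin s → ZMod q, ∑ h' : Fin s → ZMod q, ∑ j : Fin s → ZMod q,
        ∑ j' : Fin s → ZMod q,
        e ((((∑ r, a r * (Gv q s R F h j r - Gv q s R F h j' r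
            - Gv q s R F h' j r + Gv q s R F h' j' r)) : ℤ) : ℝ) / q))
      = (((∑ h : Fin s → ZMod q, ∑ h' : Fin s → ZMod q, Complex.normSq (S h h')) : ℝ) : ℂ) := by
    rw [Complex.ofReal_sum]
    refine Finset.sum_congr rfl fun h _ => ?_
    rw [Complex.ofReal_sum]
    exact Finset.sum_congr rfl fun h' _ => hinner h h'
  rw [hRHS]
  refine ⟨Complex.ofReal_im _, ?_⟩
  rw [Complex.ofReal_re]
  -- abbreviations for the Cauchy–Schwarz part
  set C : ℂ := ∑ h : Fin s → ZMod q, w h *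
      e ((((∑ r, a r * MvPolynomial.eval (fun t => ((h t).val : ℤ)) (F r)) : ℤ) : ℝ) / q) with hC
  set D : (Fin s → ZMod q) → ℂ := fun j => ∑ h, w h * e (A h j) with hD
  set US : Finset (Fin s → ZMod q) := Finset.univ.filter (fun h => ∀ i, IsUnit (h i)) with hUS
  have habsw : ∀ j : Fin s → ZMod q, (∀ i, IsUnit (j i)) → ‖w j‖ = 1 := by
    intro j hj
    rw [hw]
    rw [norm_prod]
    refine Finset.prod_eq_one fun i _ => ?_
    rw [← (hj i).unit_spec]
    exact DirichletCharacter.unit_norm_eq_one (χ i) (hj i).unit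
  have hCD : ∀ j : Fin s → ZMod q, (∀ i, IsUnit (j i)) → C = w j * D j := by
    intro j hj
    have hjs : ∀ i, (((hj i).unit : (ZMod q)ˣ) : ZMod q) = j i := fun i => (hj i).unit_spec
    let π : (Fin s → ZMod q) ≃ (Fin s → ZMod q) :=
      { toFun := fun h i => h i * j i
        invFun := fun h i => h i * (((hj i).unit⁻¹ : (ZMod q)ˣ) : ZMod q)
        left_inv := fun h => funext fun i => by
          show h i * j i * (((hj i).unit⁻¹ : (ZMod q)ˣ) : ZMod q) = h i
          rw [mul_assoc, (hj i).mul_val_inv, mul_one]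
        right_inv := fun h => funext fun i => by
          show h i * (((hj i).unit⁻¹ : (ZMod q)ˣ) : ZMod q) * j i = h i
          rw [mul_assoc, (hj i).val_inv_mul, mul_one] }
    rw [hC, hD, Finset.mul_sum]
    refine (Fintype.sum_equiv π _ _ fun h => ?_).symm
    have harg : (((∑ r, a r * MvPolynomial.eval (fun t => (((π h) t).val : ℤ)) (F r)) : ℤ) : ℝ) / q
        = A h j := by
      rw [hA]
      simp only [Gv, π, Equiv.coe_fn_mk]
    have hwpi : w (π h) = w h * w j := by
      rw [hw]
      simp only [π, Equiv.coe_fn_mk, map_mul]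
      rw [Finset.prod_mul_distrib]
    show w j * (w h * e (A h j)) = w (π h) * e _
    rw [hwpi, harg]
    ring
  have habsD : ∀ j : Fin s → ZMod q, (∀ i, IsUnit (j i)) → ‖D j‖ = ‖C‖ := by
    intro j hj
    rw [hCD j hj, norm_mul, habsw j hj, one_mul]
  -- ∑ normSq (w h) = #US
  have hwnormsq : ∀ h : Fin s → ZMod q,
      Complex.normSq (w h) = if (∀ i, IsUnit (h i)) then 1 else 0 := by
    intro h
    by_cases hh : ∀ i, IsUnit (h i)
    · rw [if_pos hh, Complex.normSq_eq_norm_sq, habsw h hh, one_pow]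
    · rw [if_neg hh]
      obtain ⟨i, hi⟩ := not_forall.mp hh
      have : w h = 0 := by
        rw [hw]
        exact Finset.prod_eq_zero (Finset.mem_univ i) ((χ i).map_nonunit hi)
      rw [this, map_zero]
  have hwsum : ∑ h : Fin s → ZMod q, Complex.normSq (w h) = (US.card : ℝ) := by
    simp only [hwnormsq, hUS, Finset.sum_boole]
  have hNpos : 0 < (US.card : ℝ) := by
    have : (fun _ => (1 : ZMod q)) ∈ US := by
      rw [hUS, Finset.mem_filter]
      exact ⟨Finset.mem_univ _, fun i => isUnit_one⟩
    exact_mod_cast Finset.card_pos.mpr ⟨_, this⟩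
  set N : ℝ := (US.card : ℝ) with hN
  set T : ℝ := ∑ j : Fin s → ZMod q, Complex.normSq (D j) with hT
  -- step 1 : N * |C|² ≤ T
  have step1 : N * ‖C‖ ^ 2 ≤ T := by
    have h1 : ∀ j ∈ US, Complex.normSq (D j) = ‖C‖ ^ 2 := by
      intro j hj
      rw [hUS, Finset.mem_filter] at hj
      rw [Complex.normSq_eq_norm_sq, habsD j hj.2]
    calc N * ‖C‖ ^ 2 = ∑ _j ∈ US, ‖C‖ ^ 2 := by
          rw [Finset.sum_const, nsmul_eq_mul, hN]
      _ = ∑ j ∈ US, Complex.normSq (D j) := (Finset.sum_congr rfl h1).symm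
      _ ≤ T := Finset.sum_le_sum_of_subset_of_nonneg (Finset.subset_univ _)
          (fun _ _ _ => Complex.normSq_nonneg _)
  -- step 2 : (T : ℂ) = ∑ h ∑ h' (w h * conj (w h')) * S h h'
  have step2 : ((T : ℝ) : ℂ) = ∑ h : Fin s → ZMod q, ∑ h' : Fin s → ZMod q,
      (w h * (starRingEnd ℂ) (w h')) * S h h' := by
    rw [hT, Complex.ofReal_sum]
    have h1 : ∀ j : Fin s → ZMod q, ((Complex.normSq (D j) : ℝ) : ℂ)
        = ∑ h : Fin s → ZMod q, ∑ h' : Fin s → ZMod q,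
          (w h * e (A h j)) * ((starRingEnd ℂ) (w h') * (starRingEnd ℂ) (e (A h' j))) := by
      intro j
      rw [← Complex.mul_conj, hD]
      rw [map_sum, Finset.sum_mul_sum]
      exact Finset.sum_congr rfl fun h _ => Finset.sum_congr rfl fun h' _ => by rw [map_mul]
    calc (∑ j : Fin s → ZMod q, ((Complex.normSq (D j) : ℝ) : ℂ))
        = ∑ j : Fin s → ZMod q, ∑ h : Fin s → ZMod q, ∑ h' : Fin s → ZMod q,
          (w h * e (A h j)) * ((starRingEnd ℂ) (w h') * (starRingEnd ℂ) (e (A h' j))) :=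
          Finset.sum_congr rfl fun j _ => h1 j
      _ = ∑ h : Fin s → ZMod q, ∑ h' : Fin s → ZMod q, ∑ j : Fin s → ZMod q,
          (w h * e (A h j)) * ((starRingEnd ℂ) (w h') * (starRingEnd ℂ) (e (A h' j))) := by
          rw [Finset.sum_comm]
          exact Finset.sum_congr rfl fun h _ => Finset.sum_comm
      _ = ∑ h : Fin s → ZMod q, ∑ h' : Fin s → ZMod q,
          (w h * (starRingEnd ℂ) (w h')) * S h h' := by
          refine Finset.sum_congr rfl fun h _ => Finset.sum_congr rfl fun h' _ => ?_
          rw [hS, Finset.mul_sum]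
          exact Finset.sum_congr rfl fun j _ => by ring
  -- step 3 : T² ≤ N² * Σ
  set Sig : ℝ := ∑ h : Fin s → ZMod q, ∑ h' : Fin s → ZMod q, Complex.normSq (S h h') with hSig
  have hTnonneg : 0 ≤ T := Finset.sum_nonneg fun _ _ => Complex.normSq_nonneg _
  have step3 : T ^ 2 ≤ N ^ 2 * Sig := by
    have hTle : T ≤ ∑ h : Fin s → ZMod q, ∑ h' : Fin s → ZMod q,
        ‖w h * (starRingEnd ℂ) (w h')‖ * ‖S h h'‖ := by
      have hT' : T = ‖((T : ℝ) : ℂ)‖ := by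
        rw [Complex.norm_of_nonneg hTnonneg]
      rw [hT', step2]
      refine le_trans (norm_sum_le _ _) (Finset.sum_le_sum fun h _ => ?_)
      refine le_trans (norm_sum_le _ _) (Finset.sum_le_sum fun h' _ => ?_)
      rw [norm_mul]
    have hCS : (∑ h : Fin s → ZMod q, ∑ h' : Fin s → ZMod q,
          ‖w h * (starRingEnd ℂ) (w h')‖ * ‖S h h'‖) ^ 2
        ≤ (∑ h : Fin s → ZMod q, ∑ h' : Fin s → ZMod q,
            ‖w h * (starRingEnd ℂ) (w h')‖ ^ 2)
          * (∑ h : Fin s → ZMod q, ∑ h' : Fin s → ZMod q, ‖S h h'‖ ^ 2) := by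
      have hCS' := Finset.sum_mul_sq_le_sq_mul_sq
        (Finset.univ : Finset ((Fin s → ZMod q) × (Fin s → ZMod q)))
        (fun p => ‖w p.1 * (starRingEnd ℂ) (w p.2)‖)
        (fun p => ‖S p.1 p.2‖)
      rw [Fintype.sum_prod_type, Fintype.sum_prod_type, Fintype.sum_prod_type] at hCS'
      exact hCS'
    have hwpair : (∑ h : Fin s → ZMod q, ∑ h' : Fin s → ZMod q,
        ‖w h * (starRingEnd ℂ) (w h')‖ ^ 2) = N ^ 2 := by
      calc (∑ h : Fin s → ZMod q, ∑ h' : Fin s → ZMod q,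
            ‖w h * (starRingEnd ℂ) (w h')‖ ^ 2)
          = ∑ h : Fin s → ZMod q, ∑ h' : Fin s → ZMod q,
              Complex.normSq (w h) * Complex.normSq (w h') := by
            refine Finset.sum_congr rfl fun h _ => Finset.sum_congr rfl fun h' _ => ?_
            rw [norm_mul, Complex.norm_conj, mul_pow, Complex.sq_norm, Complex.sq_norm]
        _ = (∑ h : Fin s → ZMod q, Complex.normSq (w h))
              * (∑ h' : Fin s → ZMod q, Complex.normSq (w h')) :=
            (Finset.sum_mul_sum _ _ _ _).symm
        _ = N * N := by rw [hwsum]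
        _ = N ^ 2 := (sq N).symm
    have hSpair : (∑ h : Fin s → ZMod q, ∑ h' : Fin s → ZMod q,
        ‖S h h'‖ ^ 2) = Sig := by
      rw [hSig]
      exact Finset.sum_congr rfl fun h _ => Finset.sum_congr rfl fun h' _ => Complex.sq_norm _
    calc T ^ 2 ≤ (∑ h : Fin s → ZMod q, ∑ h' : Fin s → ZMod q,
          ‖w h * (starRingEnd ℂ) (w h')‖ * ‖S h h'‖) ^ 2 :=
        pow_le_pow_left₀ hTnonneg hTle 2
      _ ≤ _ := hCS
      _ = N ^ 2 * Sig := by rw [hwpair, hSpair]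
  have hfin : N ^ 2 * (‖C‖ ^ 4) ≤ N ^ 2 * Sig := by
    have h1 : (N * ‖C‖ ^ 2) ^ 2 ≤ T ^ 2 :=
      pow_le_pow_left₀ (by positivity) step1 2
    calc N ^ 2 * (‖C‖ ^ 4) = (N * ‖C‖ ^ 2) ^ 2 := by ring
      _ ≤ T ^ 2 := h1
      _ ≤ N ^ 2 * Sig := step3
  exact le_of_mul_le_mul_left hfin (pow_pos hNpos 2)
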